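/- Sharpening with η ∈ (0,1) does not increase Shannon entropy: if l ∈ R^c is a positive probability vector and η ∈ (0,1), then H(Sharpen(l, η)) ≤ H(l), where H(p) = −Σ_k p_k log p_k. -/
import Mathlib


open Finset Real

private lemma aux_sign {x y β : ℝ} (hx : 0 < x) (hy : 0 < y) (hβ : 1 ≤ β)
    (hxy : x ≤ y) : x ^ β * y ≤ x * y ^ β := by
  have h1 : x ^ β = x ^ (1:ℝ) * x ^ (β - 1) := by rw [← Real.rpow_add hx]; ring_nf
  have h2 : y ^ β = y ^ (1:ℝ) * y ^ (β - 1) := by rw [← Real.rpow_add hy]; ring_nf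
  rw [h1, h2, Real.rpow_one, Real.rpow_one]
  have h3 : x ^ (β - 1) ≤ y ^ (β - 1) :=
    Real.rpow_le_rpow hx.le hxy (by linarith)
  have h5 := mul_le_mul_of_nonneg_left h3 (mul_nonneg hx.le hy.le)
  nlinarith [h5]

/-- Weighted Chebyshev: `(∑ l^β) * (∑ l log l) ≤ (∑ l) * (∑ l^β log l)` for `β ≥ 1`. -/
private lemma cheb {c : ℕ} (l : Fin c → ℝ) (β : ℝ) (hpos : ∀ k, 0 < l k) (hβ : 1 ≤ β) :
    (∑ j, l j ^ β) * (∑ k, l k * Real.log (l k)) ≤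
      (∑ j, l j) * (∑ k, l k ^ β * Real.log (l k)) := by
  set S1 := ∑ k, l k ^ β * Real.log (l k) with hS1
  set S2 := ∑ k, l k * Real.log (l k) with hS2
  set S3 := ∑ j, l j ^ β with hS3
  set S4 := ∑ j, l j with hS4
  have key : 0 ≤ ∑ j, ∑ k,
      (l j * l k ^ β - l j ^ β * l k) * (Real.log (l k) - Real.log (l j)) := by
    refine Finset.sum_nonneg fun j _ => Finset.sum_nonneg fun k _ => ?_
    rcases le_total (l j) (l k) with h | h
    · refine mul_nonneg (sub_nonneg.2 ?_) (sub_nonneg.2 (Real.log_le_log (hpos j) h))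
      exact aux_sign (hpos j) (hpos k) hβ h
    · refine mul_nonneg_iff.2 (Or.inr ⟨sub_nonpos.2 ?_,
        sub_nonpos.2 (Real.log_le_log (hpos k) h)⟩)
      have := aux_sign (hpos k) (hpos j) hβ h
      nlinarith [this]
  have inner : ∀ j, (∑ k,
      (l j * l k ^ β - l j ^ β * l k) * (Real.log (l k) - Real.log (l j))) =
      l j * S1 - l j ^ β * S2 - (l j * Real.log (l j)) * S3
        + (l j ^ β * Real.log (l j)) * S4 := by
    intro j
    rw [hS1, hS2, hS3, hS4, Finset.mul_sum, Finset.mul_sum, Finset.mul_sum,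
      Finset.mul_sum, ← Finset.sum_sub_distrib, ← Finset.sum_sub_distrib,
      ← Finset.sum_add_distrib]
    exact Finset.sum_congr rfl fun k _ => by ring
  have expand : (∑ j, ∑ k,
      (l j * l k ^ β - l j ^ β * l k) * (Real.log (l k) - Real.log (l j))) =
      S4 * S1 - S3 * S2 - S2 * S3 + S1 * S4 := by
    rw [Finset.sum_congr rfl fun j _ => inner j]
    rw [hS1, hS2, hS3, hS4, Finset.sum_mul, Finset.sum_mul, Finset.sum_mul,
      Finset.sum_mul, ← Finset.sum_sub_distrib, ← Finset.sum_sub_distrib,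
      ← Finset.sum_add_distrib]
  rw [expand] at key
  nlinarith [key]

/-- Sharpening with temperature `η ∈ (0,1)` does not increase the
Shannon entropy `H(p) = −∑ p k log p k`. -/
theorem stmt6 (c : ℕ) (l : Fin c → ℝ) (η : ℝ)
    (hpos : ∀ k, 0 < l k) (hsum : ∑ k, l k = 1) (hη : η ∈ Set.Ioo (0 : ℝ) 1) :
    -(∑ k, (l k ^ (1 / η) / ∑ j, l j ^ (1 / η)) *
        Real.log (l k ^ (1 / η) / ∑ j, l j ^ (1 / η)))
      ≤ -(∑ k, l k * Real.log (l k)) := by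
  obtain ⟨hη0, hη1⟩ := hη
  set β : ℝ := 1 / η with hβdef
  have hβ : 1 ≤ β := by
    rw [hβdef, le_div_iff₀ hη0]; linarith
  rcases Nat.eq_zero_or_pos c with hc | hc
  · subst hc; simp at hsum
  have : Nonempty (Fin c) := ⟨⟨0, hc⟩⟩
  set Z : ℝ := ∑ j, l j ^ β with hZdef
  have hZpos : 0 < Z :=
    Finset.sum_pos (fun j _ => Real.rpow_pos_of_pos (hpos j) β) Finset.univ_nonempty
  set q : Fin c → ℝ := fun k => l k ^ β / Z with hqdef
  have hqpos : ∀ k, 0 < q k := fun k => div_pos (Real.rpow_pos_of_pos (hpos k) β) hZpos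
  have hqsum : ∑ k, q k = 1 := by
    show (∑ k, l k ^ β / Z) = 1
    rw [← Finset.sum_div]
    exact div_self hZpos.ne'
  -- Step 1 (Gibbs): -∑ q log q ≤ -∑ q log l
  have gibbs : -(∑ k, q k * Real.log (q k)) ≤ -(∑ k, q k * Real.log (l k)) := by
    have h1 : ∀ k, q k * Real.log (l k) - q k * Real.log (q k) ≤ l k - q k := by
      intro k
      have hlog : Real.log (l k / q k) ≤ l k / q k - 1 :=
        Real.log_le_sub_one_of_pos (div_pos (hpos k) (hqpos k))
      have := mul_le_mul_of_nonneg_left hlog (hqpos k).le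
      rw [Real.log_div (hpos k).ne' (hqpos k).ne'] at this
      have hq : q k * (l k / q k - 1) = l k - q k := by
        rw [mul_sub, mul_one, mul_div_cancel₀ _ (hqpos k).ne']
      rw [hq] at this; linarith [this]
    have h2 : (∑ k, (q k * Real.log (l k) - q k * Real.log (q k))) ≤
        ∑ k, (l k - q k) := Finset.sum_le_sum fun k _ => h1 k
    rw [Finset.sum_sub_distrib, Finset.sum_sub_distrib, hsum, hqsum] at h2
    linarith
  -- Step 2 (Chebyshev): -∑ q log l ≤ -∑ l log l
  have cheby : -(∑ k, q k * Real.log (l k)) ≤ -(∑ k, l k * Real.log (l k)) := by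
    have h := cheb l β hpos hβ
    rw [hsum, one_mul, ← hZdef] at h
    have hq : (∑ k, q k * Real.log (l k)) = (∑ k, l k ^ β * Real.log (l k)) / Z := by
      show (∑ k, l k ^ β / Z * Real.log (l k)) = _
      rw [Finset.sum_div]
      exact Finset.sum_congr rfl fun k _ => div_mul_eq_mul_div _ _ _
    rw [hq]
    have : (∑ k, l k * Real.log (l k)) ≤ (∑ k, l k ^ β * Real.log (l k)) / Z := by
      rw [le_div_iff₀ hZpos]; linarith
    linarith
  exact le_trans gibbs cheby
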